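/- If p is a real polynomial all of whose zeros are real, then p has no positive local minimum and no negative local maximum on ℝ; i.e., if x₀ is a local minimum point of p with p(x₀) > 0 or a local maximum point with p(x₀) < 0, this is impossible. -/

import Mathlib

open Polynomial

private lemma multiset_prod_lt_aux {m : Multiset ℝ} (hm : m ≠ 0) {f g : ℝ → ℝ}
    (h : ∀ r ∈ m, 0 < f r ∧ f r < g r) :
    (m.map f).prod < (m.map g).prod := by
  induction m using Multiset.induction with
  | empty => simp at hm
  | cons a s ih =>
    simp only [Multiset.map_cons, Multiset.prod_cons]
    have hfa := h a (Multiset.mem_cons_self a s)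
    rcases eq_or_ne s 0 with rfl | hs
    · simpa using hfa.2
    · have hs' := ih hs (fun r hr => (h r (Multiset.mem_cons_of_mem hr)))
      have hfpos : 0 < (s.map f).prod := by
        apply Multiset.prod_pos
        intro x hx
        obtain ⟨r, hr, rfl⟩ := Multiset.mem_map.mp hx
        exact (h r (Multiset.mem_cons_of_mem hr)).1
      have hga : 0 < g a := lt_trans hfa.1 hfa.2
      nlinarith [hfa.1, hfa.2]

private lemma no_pos_local_min (p : Polynomial ℝ) (hdeg : 0 < p.degree)
    (hroots : ∀ z : ℂ, Polynomial.aeval z p = 0 → z.im = 0)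
    (x₀ : ℝ) (hmin : IsLocalMin (fun x => p.eval x) x₀) (hpos : 0 < p.eval x₀) : False := by
  classical
  have hp0 : p ≠ 0 := fun h => by simp [h] at hdeg
  set f : ℝ →+* ℂ := algebraMap ℝ ℂ with hf
  have hinj : Function.Injective f := (algebraMap ℝ ℂ).injective
  have hmapne : p.map f ≠ 0 := (Polynomial.map_ne_zero_iff hinj).mpr hp0
  set M : Multiset ℂ := (p.map f).roots with hMdef
  have hMim : ∀ z ∈ M, z.im = 0 := by
    intro z hz
    apply hroots
    have h := (mem_roots hmapne).mp hz
    rw [aeval_def, ← eval_map]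
    exact h
  -- the real parts of the complex roots
  set m : Multiset ℝ := M.map Complex.re with hmdef
  have hmM : m.map f = M := by
    rw [hmdef, Multiset.map_map]
    refine (Multiset.map_congr rfl fun z hz => ?_).trans (Multiset.map_id M)
    have : z.im = 0 := hMim z hz
    apply Complex.ext <;> simp [hf, this]
  have hcardM : Multiset.card M = p.natDegree := by
    have hs : Splits (p.map f) := IsAlgClosed.splits _
    have := hs.natDegree_eq_card_roots
    rwa [natDegree_map, eq_comm] at this
  have hmle : m ≤ p.roots := by
    rw [Multiset.le_iff_count]
    intro x
    have h1 : m.count x = M.count (f x) := by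
      rw [← hmM, Multiset.count_map_eq_count' f m hinj]
    rw [h1, hMdef, count_roots, ← eq_rootMultiplicity_map hinj, count_roots]
  have hcard : p.roots.card = p.natDegree := by
    have h1 : p.natDegree ≤ p.roots.card := by
      calc p.natDegree = Multiset.card M := hcardM.symm
        _ = Multiset.card m := by rw [hmdef, Multiset.card_map]
        _ ≤ p.roots.card := Multiset.card_le_card hmle
    exact le_antisymm (p.card_roots' ) h1
  have hsplit : Splits p := splits_iff_card_roots.mpr hcard
  have hfact := hsplit.eq_prod_roots
  have heval : ∀ x : ℝ, p.eval x = p.leadingCoeff * (p.roots.map fun r => x - r).prod := by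
    intro x
    conv_lhs => rw [hfact]
    rw [eval_mul, eval_C, eval_multiset_prod, Multiset.map_map]
    simp
  have hne : p.roots ≠ 0 := by
    intro h
    rw [h, Multiset.card_zero] at hcard
    have := natDegree_pos_iff_degree_pos.mpr hdeg
    omega
  -- get ε from continuity and the local min
  have h1 : ∀ᶠ x in nhds x₀, 0 < p.eval x := by
    have hopen : IsOpen {x : ℝ | 0 < p.eval x} := isOpen_lt continuous_const p.continuous
    exact hopen.mem_nhds hpos
  have hboth := h1.and hmin
  obtain ⟨ε, hε, hball⟩ := Metric.eventually_nhds_iff.mp hboth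
  set a := x₀ - ε / 2 with ha
  set b := x₀ + ε / 2 with hb
  have hda : dist a x₀ < ε := by
    rw [Real.dist_eq]; rw [ha]; rw [abs_of_nonpos] <;> linarith
  have hdb : dist b x₀ < ε := by
    rw [Real.dist_eq]; rw [hb]; rw [abs_of_nonneg] <;> linarith
  obtain ⟨hpa, hpa'⟩ := hball hda
  obtain ⟨hpb, hpb'⟩ := hball hdb
  simp only at hpa' hpb'
  -- key factor inequality for each root
  have hkey : ∀ r ∈ p.roots, 0 < (a - r) * (b - r) ∧ (a - r) * (b - r) < (x₀ - r) ^ 2 := by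
    intro r hr
    have hroot : p.eval r = 0 := (mem_roots hp0).mp hr
    have hout : ¬ (a < r ∧ r < b) := by
      rintro ⟨h1', h2'⟩
      rw [ha] at h1'
      rw [hb] at h2'
      have : dist r x₀ < ε := by
        rw [Real.dist_eq, abs_lt]; constructor <;> linarith
      have := (hball this).1
      linarith
    have hra : r ≠ a := fun h => by rw [← h] at hpa; linarith
    have hrb : r ≠ b := fun h => by rw [← h] at hpb; linarith
    constructor
    · rcases lt_or_ge r b with h | h
      · have h2 : r ≤ a := by by_contra h'; exact hout ⟨lt_of_not_ge h', h⟩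
        have h3 : r < a := lt_of_le_of_ne h2 hra
        have hab : a < b := by rw [ha, hb]; linarith
        nlinarith
      · have h3 : b < r := lt_of_le_of_ne h (Ne.symm hrb)
        have hab : a < b := by rw [ha, hb]; linarith
        nlinarith
    · have : x₀ = (a + b) / 2 := by rw [ha, hb]; ring
      rw [this]
      have hab : a < b := by rw [ha, hb]; linarith
      nlinarith [sq_nonneg (b - a)]
  -- product inequality
  have hprod : (p.roots.map fun r => (a - r) * (b - r)).prod
      < (p.roots.map fun r => (x₀ - r) ^ 2).prod :=
    multiset_prod_lt_aux hne hkey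
  have hlc : p.leadingCoeff ≠ 0 := leadingCoeff_ne_zero.mpr hp0
  have hlc2 : 0 < p.leadingCoeff ^ 2 := by positivity
  have hevab : p.eval a * p.eval b
      = p.leadingCoeff ^ 2 * (p.roots.map fun r => (a - r) * (b - r)).prod := by
    rw [heval a, heval b, Multiset.prod_map_mul]; ring
  have hevx : p.eval x₀ ^ 2
      = p.leadingCoeff ^ 2 * (p.roots.map fun r => (x₀ - r) ^ 2).prod := by
    have : (p.roots.map fun r => (x₀ - r) ^ 2)
        = (p.roots.map fun r => (x₀ - r) * (x₀ - r)) := by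
      apply Multiset.map_congr rfl; intro r _; ring
    rw [this, heval x₀, Multiset.prod_map_mul]; ring
  have hfinal : p.eval a * p.eval b < p.eval x₀ ^ 2 := by
    rw [hevab, hevx]
    exact mul_lt_mul_of_pos_left hprod hlc2
  nlinarith [hpa', hpb', hpos]

/-- A nonconstant real polynomial all of whose complex zeros are real has no positive
local minimum and no negative local maximum on ℝ. -/
theorem stmt10 (p : Polynomial ℝ) (hdeg : 0 < p.degree)
    (hroots : ∀ z : ℂ, Polynomial.aeval z p = 0 → z.im = 0) :
    ∀ x₀ : ℝ,
      (¬ (IsLocalMin (fun x => p.eval x) x₀ ∧ 0 < p.eval x₀)) ∧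
      (¬ (IsLocalMax (fun x => p.eval x) x₀ ∧ p.eval x₀ < 0)) := by
  intro x₀
  constructor
  · rintro ⟨hmin, hpos⟩
    exact no_pos_local_min p hdeg hroots x₀ hmin hpos
  · rintro ⟨hmax, hneg⟩
    have hdeg' : 0 < (-p).degree := by rwa [degree_neg]
    have hroots' : ∀ z : ℂ, Polynomial.aeval z (-p) = 0 → z.im = 0 := by
      intro z hz
      apply hroots
      rw [map_neg, neg_eq_zero] at hz
      exact hz
    have hmin' : IsLocalMin (fun x => (-p).eval x) x₀ := by
      simp only [eval_neg]
      exact hmax.neg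
    have hpos' : 0 < (-p).eval x₀ := by simp [hneg]
    exact no_pos_local_min (-p) hdeg' hroots' x₀ hmin' hpos'
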